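/- Let R be a commutative ring with 1, M a free R-module with basis B = {b_1, ..., b_l}, and U the submodule of M consisting of all elements Σ c_i b_i such that Σ_j a_{ij} c_j = 0 for all i, where (a_{ij}) is a fixed family of elements of R. Let {b_1*, ..., b_l*} be the basis of M* = Hom_R(M, R) dual to B, and let X be the submodule of M* generated by all elements Σ_j a_{ij} b_j*. Then U is isomorphic as an R-module to (M*/X)*. -/

import Mathlib

/-- Lemma 2.3 of [dds] ("switch" lemma): for a free module `M` over a commutative ring `R`
with basis `b`, the submodule `U` cut out by the linear equations `∑ j, a i j * c j = 0`
on coordinates is isomorphic to the dual of `M^* / X`, where `X` is the submodule of the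
dual generated by the functionals `∑ j, a i j • b.coord j`. -/
theorem stmt_0 {R : Type*} [CommRing R] {M : Type*} [AddCommGroup M] [Module R M]
    {l : ℕ} (b : Module.Basis (Fin l) R M) {ι : Type*} (a : ι → Fin l → R)
    (U : Submodule R M)
    (hU : ∀ x : M, x ∈ U ↔ ∀ i : ι, ∑ j : Fin l, a i j * b.repr x j = 0)
    (X : Submodule R (Module.Dual R M))
    (hX : X = Submodule.span R (Set.range fun i : ι => ∑ j : Fin l, a i j • b.coord j)) :
    Nonempty (U ≃ₗ[R] Module.Dual R (Module.Dual R M ⧸ X)) := by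
  have hfin : Module.Finite R M := Module.Finite.of_basis b
  have hfree : Module.Free R M := Module.Free.of_basis b
  set e := Module.evalEquiv R M with he
  have happ : ∀ (x : M) (f : Module.Dual R M), e x f = f x := by
    intro x f
    have : e.toLinearMap = Module.Dual.eval R M := Module.evalEquiv_toLinearMap R M
    calc e x f = e.toLinearMap x f := rfl
    _ = f x := by rw [this]; rfl
  have hmem : ∀ x : M, x ∈ U ↔ e x ∈ X.dualAnnihilator := by
    intro x
    rw [hU, Submodule.mem_dualAnnihilator, hX]
    constructor
    · intro h f hf
      induction hf using Submodule.span_induction with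
      | mem f hf =>
        obtain ⟨i, rfl⟩ := hf
        rw [happ]
        simpa using h i
      | zero => simp
      | add f g _ _ hf hg => rw [happ] at hf hg ⊢; simp [hf, hg]
      | smul c f _ hf => rw [happ] at hf ⊢; simp [hf]
    · intro h i
      have := h _ (Submodule.subset_span ⟨i, rfl⟩)
      rw [happ] at this
      simpa using this
  have key : U.map (e : M →ₗ[R] Module.Dual R (Module.Dual R M)) = X.dualAnnihilator := by
    ext φ
    simp only [Submodule.mem_map]
    constructor
    · rintro ⟨x, hx, rfl⟩
      exact (hmem x).mp hx
    · intro hφ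
      exact ⟨e.symm φ, (hmem _).mpr (by simpa using hφ), by simp⟩
  exact ⟨(e.submoduleMap U).trans ((LinearEquiv.ofEq _ _ key).trans
    X.dualQuotEquivDualAnnihilator.symm)⟩
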